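/- Let N ≥ 1, μ₂ ≥ μ₁ > 0, κ ∈ ℝ and −(μ₁²μ₂)^{1/3} ≤ β ≤ 0. If u, v : ℝ^N → ℝ are C² functions with u(x) ≥ 0 and v(x) ≥ 0 for all x, satisfying −Δu + u = μ₁u³ + βuv² − κv and −Δv + v = μ₂v³ + βu²v − κu pointwise, then U := u + v satisfies −ΔU(x) + (1+κ)U(x) ≥ μ₁^{1/3}·(μ₁^{1/3}u(x) − μ₂^{1/3}v(x))²·U(x) for all x ∈ ℝ^N. -/

import Mathlib

open MeasureTheory

/-- The Euclidean Laplacian: sum of second partial derivatives. -/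
noncomputable def laplacian {N : ℕ} (u : EuclideanSpace ℝ (Fin N) → ℝ)
    (x : EuclideanSpace ℝ (Fin N)) : ℝ :=
  ∑ i, iteratedFDeriv ℝ 2 u x ![EuclideanSpace.single i 1, EuclideanSpace.single i 1]

theorem stmt16 (N : ℕ) (hN : 1 ≤ N) (μ₁ μ₂ κ β : ℝ)
    (hμ₁ : 0 < μ₁) (hμ₁₂ : μ₁ ≤ μ₂)
    (hβl : -((μ₁ ^ 2 * μ₂) ^ ((1 : ℝ) / 3)) ≤ β) (hβu : β ≤ 0)
    (u v : EuclideanSpace ℝ (Fin N) → ℝ) (hu : ContDiff ℝ 2 u) (hv : ContDiff ℝ 2 v)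
    (hupos : ∀ x, 0 ≤ u x) (hvpos : ∀ x, 0 ≤ v x)
    (hequ : ∀ x, -laplacian u x + u x = μ₁ * u x ^ 3 + β * u x * v x ^ 2 - κ * v x)
    (heqv : ∀ x, -laplacian v x + v x = μ₂ * v x ^ 3 + β * u x ^ 2 * v x - κ * u x) :
    ∀ x, -laplacian (fun y => u y + v y) x + (1 + κ) * (u x + v x) ≥
      μ₁ ^ ((1 : ℝ) / 3) * (μ₁ ^ ((1 : ℝ) / 3) * u x - μ₂ ^ ((1 : ℝ) / 3) * v x) ^ 2 *
        (u x + v x) := by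
  intro x
  have hμ₂ : 0 < μ₂ := hμ₁.trans_le hμ₁₂
  set a := μ₁ ^ ((1 : ℝ) / 3) with ha
  set b := μ₂ ^ ((1 : ℝ) / 3) with hb
  have ha0 : 0 < a := Real.rpow_pos_of_pos hμ₁ _
  have hb0 : 0 < b := Real.rpow_pos_of_pos hμ₂ _
  have hab : a ≤ b := Real.rpow_le_rpow hμ₁.le hμ₁₂ (by norm_num)
  have ha3 : a ^ 3 = μ₁ := by
    rw [ha, ← Real.rpow_natCast (μ₁ ^ ((1:ℝ)/3)) 3, ← Real.rpow_mul hμ₁.le]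
    norm_num
  have hb3 : b ^ 3 = μ₂ := by
    rw [hb, ← Real.rpow_natCast (μ₂ ^ ((1:ℝ)/3)) 3, ← Real.rpow_mul hμ₂.le]
    norm_num
  have hc : (μ₁ ^ 2 * μ₂) ^ ((1 : ℝ) / 3) = a ^ 2 * b := by
    rw [Real.mul_rpow (pow_nonneg hμ₁.le 2) hμ₂.le, ha, hb,
      ← Real.rpow_natCast μ₁ 2, ← Real.rpow_mul hμ₁.le,
      ← Real.rpow_natCast (μ₁ ^ ((1:ℝ)/3)) 2, ← Real.rpow_mul hμ₁.le]
    norm_num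
  have hβ : -(a ^ 2 * b) ≤ β := hc ▸ hβl
  -- Laplacian of the sum
  have hsum : laplacian (fun y => u y + v y) x = laplacian u x + laplacian v x := by
    unfold laplacian
    rw [← Finset.sum_add_distrib]
    refine Finset.sum_congr rfl fun i _ => ?_
    have : (fun y => u y + v y) = u + v := rfl
    rw [this, iteratedFDeriv_add_apply (i := 2) hu.contDiffAt hv.contDiffAt]
    rfl
  have h1 := hequ x
  have h2 := heqv x
  have hux := hupos x
  have hvx := hvpos x
  rw [hsum]
  have key : μ₁ * u x ^ 3 + μ₂ * v x ^ 3 + β * u x * v x ^ 2 + β * u x ^ 2 * v x ≥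
      a * (a * u x - b * v x) ^ 2 * (u x + v x) := by
    rw [← ha3, ← hb3]
    nlinarith [mul_nonneg (mul_nonneg (sub_nonneg.2 hab) hvx)
        (add_nonneg (sq_nonneg (a * u x - b * v x)) (mul_nonneg (mul_nonneg ha0.le hb0.le)
          (mul_nonneg hux hvx))),
      mul_nonneg (by linarith : (0:ℝ) ≤ β + a ^ 2 * b)
        (add_nonneg (mul_nonneg (mul_nonneg hux hux) hvx)
          (mul_nonneg (mul_nonneg hux hvx) hvx))]
  linarith
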